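/- Let (x₀,y₀) ∈ ℝ² with x₀ < 1 and y₀ ≤ 0. Then for every n ≥ 0 the forward orbit of (x₀,y₀) is defined up to time n, and writing fⁿ(x₀,y₀) = (xₙ,yₙ) one has xₙ ≤ 1 and yₙ ≤ 0 for all n; moreover xₙ → −∞ and yₙ → −∞ as n → ∞ (points of R₊ converge to the parabolic fixed point at infinity under forward iteration). -/
import Mathlib


open Filter

/-- The birational map f(x,y) = (y(x+a)/(x-1), x+a-1). -/
noncomputable def birat (a : ℝ) (p : ℝ × ℝ) : ℝ × ℝ :=
  (p.2 * (p.1 + a) / (p.1 - 1), p.1 + a - 1)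

/-- The inverse map f⁻¹(x,y) = (y+1-a, x(y-a)/(y+1)). -/
noncomputable def biratInv (a : ℝ) (p : ℝ × ℝ) : ℝ × ℝ :=
  (p.2 + 1 - a, p.1 * (p.2 - a) / (p.2 + 1))

/-- The forward orbit of `p` is defined up to time `n`. -/
def orbitDefined (a : ℝ) (p : ℝ × ℝ) (n : ℕ) : Prop :=
  ∀ k < n, ((birat a)^[k] p).1 ≠ 1

def Rplus : Set (ℝ × ℝ) := {p | p.1 ≤ 1 ∧ p.2 ≤ 0}
def Rminus : Set (ℝ × ℝ) := {p | 0 ≤ p.1 ∧ -1 ≤ p.2}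
def Rzero : Set (ℝ × ℝ) := {p | 1 ≤ p.1 ∧ p.2 ≤ -1}
def Rone : Set (ℝ × ℝ) := {p | p.1 ≤ 0 ∧ 0 ≤ p.2}
def intRplus : Set (ℝ × ℝ) := {p | p.1 < 1 ∧ p.2 < 0}
def intRzero : Set (ℝ × ℝ) := {p | 1 < p.1 ∧ p.2 < -1}
def intRone : Set (ℝ × ℝ) := {p | p.1 < 0 ∧ 0 < p.2}

/-- `Rw 0 = R₀`, `Rw 1 = R₁`. -/
def Rw (i : Fin 2) : Set (ℝ × ℝ) := if i = 0 then Rzero else Rone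

/-- `intRw 0 = int R₀`, `intRw 1 = int R₁`. -/
def intRw (i : Fin 2) : Set (ℝ × ℝ) := if i = 0 then intRzero else intRone

/-- Euclidean distance on ℝ². -/
noncomputable def eucDist (p q : ℝ × ℝ) : ℝ :=
  Real.sqrt ((p.1 - q.1) ^ 2 + (p.2 - q.2) ^ 2)

theorem stmt4 (a : ℝ) (ha : a < -1) (x0 y0 : ℝ) (hx : x0 < 1) (hy : y0 ≤ 0) :
    (∀ n : ℕ, orbitDefined a (x0, y0) n ∧
      ((birat a)^[n] (x0, y0)).1 ≤ 1 ∧ ((birat a)^[n] (x0, y0)).2 ≤ 0) ∧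
    Tendsto (fun n : ℕ => ((birat a)^[n] (x0, y0)).1) atTop atBot ∧
    Tendsto (fun n : ℕ => ((birat a)^[n] (x0, y0)).2) atTop atBot := by
  set q : ℕ → ℝ × ℝ := fun n => (birat a)^[n] (x0, y0) with hq
  have hstep : ∀ n, q (n + 1) = birat a (q n) := fun n =>
    Function.iterate_succ_apply' _ _ _
  -- Invariant: x < 1, y ≤ 0 forever.
  have inv : ∀ n, (q n).1 < 1 ∧ (q n).2 ≤ 0 := by
    intro n
    induction n with
    | zero => exact ⟨hx, hy⟩
    | succ n ih =>
      obtain ⟨h1, h2⟩ := ih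
      rw [hstep]
      have hd : (q n).1 - 1 < 0 := by linarith
      constructor
      · show (q n).2 * ((q n).1 + a) / ((q n).1 - 1) < 1
        have hnum : 0 ≤ (q n).2 * ((q n).1 + a) := by nlinarith
        have := div_nonpos_of_nonneg_of_nonpos hnum (le_of_lt hd)
        linarith
      · show (q n).1 + a - 1 ≤ 0
        linarith
  -- Second coordinate recursion (exact).
  have step2 : ∀ n, (q (n + 1)).2 = (q n).1 + a - 1 := by
    intro n; rw [hstep]; rfl
  -- First coordinate decreases below previous second coordinate.
  have step1 : ∀ n, (q (n + 1)).1 ≤ (q n).2 := by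
    intro n
    obtain ⟨h1, h2⟩ := inv n
    rw [hstep]
    show (q n).2 * ((q n).1 + a) / ((q n).1 - 1) ≤ (q n).2
    have hd : (q n).1 - 1 < 0 := by linarith
    rw [div_le_iff_of_neg hd]
    nlinarith
  -- Two-step decrease.
  have two1 : ∀ n, (q (n + 2)).1 ≤ (q n).1 + (a - 1) := by
    intro n
    have := step1 (n + 1)
    have := step2 n
    have hn2 : n + 2 = (n + 1) + 1 := rfl
    rw [hn2]
    linarith [step1 (n + 1), step2 n]
  have two2 : ∀ n, (q (n + 2)).2 ≤ (q n).2 + (a - 1) := by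
    intro n
    have hn2 : n + 2 = (n + 1) + 1 := rfl
    rw [hn2, step2 (n + 1)]
    linarith [step1 n]
  -- Iterated two-step decrease.
  have key1 : ∀ k n, (q (n + 2 * k)).1 ≤ (q n).1 + k * (a - 1) := by
    intro k
    induction k with
    | zero => intro n; simp
    | succ k ih =>
      intro n
      have h1 : n + 2 * (k + 1) = (n + 2 * k) + 2 := by ring
      have h2 := two1 (n + 2 * k)
      rw [h1]
      have := ih n
      push_cast
      linarith
  have key2 : ∀ k n, (q (n + 2 * k)).2 ≤ (q n).2 + k * (a - 1) := by
    intro k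
    induction k with
    | zero => intro n; simp
    | succ k ih =>
      intro n
      have h1 : n + 2 * (k + 1) = (n + 2 * k) + 2 := by ring
      have h2 := two2 (n + 2 * k)
      rw [h1]
      have := ih n
      push_cast
      linarith
  have ha1 : (0:ℝ) < 1 - a := by linarith
  -- generic tendsto helper
  have tends : ∀ g : ℕ → ℝ, (∀ k n, g (n + 2 * k) ≤ g n + k * (a - 1)) →
      Tendsto g atTop atBot := by
    intro g hg
    rw [tendsto_atTop_atBot]
    intro b
    set M : ℝ := max (g 0) (g 1) with hM
    obtain ⟨K, hK⟩ := exists_nat_gt ((M - b) / (1 - a))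
    rw [div_lt_iff₀ ha1] at hK
    refine ⟨2 * K + 2, fun n hn => ?_⟩
    set k := n / 2 with hk
    set m := n % 2 with hm
    have hmk : n = m + 2 * k := by omega
    have hm2 : m = 0 ∨ m = 1 := by omega
    have hkK : K ≤ k := by omega
    have hgm : g m ≤ M := by
      rcases hm2 with h | h <;> rw [h]
      · exact le_max_left _ _
      · exact le_max_right _ _
    have h1 : g n ≤ g m + k * (a - 1) := by rw [hmk]; exact hg k m
    have h2 : (k : ℝ) * (a - 1) ≤ K * (a - 1) := by
      apply mul_le_mul_of_nonpos_right _ (by linarith)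
      exact_mod_cast hkK
    nlinarith
  refine ⟨fun n => ⟨fun k _ => ne_of_lt (inv k).1, le_of_lt (inv n).1, (inv n).2⟩,
    tends _ key1, tends _ key2⟩
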